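/- There is no probability space carrying random variables A₁, A₂, B₁, B₂, C₁, C₂, each taking values in {−1, 1} almost surely, such that E[A₁B₁C₁] = −1, E[A₂B₂C₁] = −1, E[A₂B₁C₂] = −1, and E[A₁B₂C₂] = 1. -/

import Mathlib

open MeasureTheory

set_option linter.unnecessarySimpa false
set_option maxHeartbeats 1000000

lemma aux_pm1 {Ω : Type} [MeasurableSpace Ω] {μ : Measure Ω} [IsProbabilityMeasure μ]
    {f : Ω → ℝ} (hm : Measurable f) (hpm : ∀ᵐ ω ∂μ, f ω = -1 ∨ f ω = 1) :
    Integrable f μ := by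
  refine (integrable_const (1 : ℝ)).mono' hm.aestronglyMeasurable ?_
  filter_upwards [hpm] with ω h
  rcases h with h | h <;> simp [h]

lemma aux_eq {Ω : Type} [MeasurableSpace Ω] {μ : Measure Ω} [IsProbabilityMeasure μ]
    {f : Ω → ℝ} {c : ℝ} (hc : c = -1 ∨ c = 1) (hm : Measurable f)
    (hpm : ∀ᵐ ω ∂μ, f ω = -1 ∨ f ω = 1) (hint : ∫ ω, f ω ∂μ = c) :
    ∀ᵐ ω ∂μ, f ω = c := by
  have hif : Integrable f μ := aux_pm1 hm hpm
  have hcc : c * c = 1 := by rcases hc with hc | hc <;> simp [hc]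
  have h0 : ∫ ω, (1 - c * f ω) ∂μ = 0 := by
    rw [integral_sub (integrable_const 1) (hif.const_mul c), integral_const_mul, hint]
    simp [hcc]
  have hnn : 0 ≤ᵐ[μ] fun ω => 1 - c * f ω := by
    filter_upwards [hpm] with ω h
    rcases hc with hc | hc <;> rcases h with h | h <;> simp [hc, h]
  have := (integral_eq_zero_iff_of_nonneg_ae hnn ((integrable_const 1).sub (hif.const_mul c))).mp h0
  filter_upwards [this] with ω h
  have h' : 1 - c * f ω = 0 := h
  rcases hc with hc | hc <;> rw [hc] at h' ⊢ <;> linarith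

theorem stmt_12 :
    ¬ ∃ (Ω : Type) (_ : MeasurableSpace Ω) (μ : Measure Ω) (A₁ A₂ B₁ B₂ C₁ C₂ : Ω → ℝ),
      IsProbabilityMeasure μ ∧
      Measurable A₁ ∧ Measurable A₂ ∧ Measurable B₁ ∧ Measurable B₂ ∧
      Measurable C₁ ∧ Measurable C₂ ∧
      (∀ᵐ ω ∂μ, A₁ ω = -1 ∨ A₁ ω = 1) ∧ (∀ᵐ ω ∂μ, A₂ ω = -1 ∨ A₂ ω = 1) ∧
      (∀ᵐ ω ∂μ, B₁ ω = -1 ∨ B₁ ω = 1) ∧ (∀ᵐ ω ∂μ, B₂ ω = -1 ∨ B₂ ω = 1) ∧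
      (∀ᵐ ω ∂μ, C₁ ω = -1 ∨ C₁ ω = 1) ∧ (∀ᵐ ω ∂μ, C₂ ω = -1 ∨ C₂ ω = 1) ∧
      (∫ ω, A₁ ω * B₁ ω * C₁ ω ∂μ = -1) ∧
      (∫ ω, A₂ ω * B₂ ω * C₁ ω ∂μ = -1) ∧
      (∫ ω, A₂ ω * B₁ ω * C₂ ω ∂μ = -1) ∧
      (∫ ω, A₁ ω * B₂ ω * C₂ ω ∂μ = 1) := by
  rintro ⟨Ω, mΩ, μ, A₁, A₂, B₁, B₂, C₁, C₂, hprob, mA₁, mA₂, mB₁, mB₂, mC₁, mC₂,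
    pA₁, pA₂, pB₁, pB₂, pC₁, pC₂, i1, i2, i3, i4⟩
  have prodpm : ∀ {f g h : Ω → ℝ}, (∀ᵐ ω ∂μ, f ω = -1 ∨ f ω = 1) →
      (∀ᵐ ω ∂μ, g ω = -1 ∨ g ω = 1) → (∀ᵐ ω ∂μ, h ω = -1 ∨ h ω = 1) →
      ∀ᵐ ω ∂μ, f ω * g ω * h ω = -1 ∨ f ω * g ω * h ω = 1 := by
    intro f g h hf hg hh
    filter_upwards [hf, hg, hh] with ω h1 h2 h3
    rcases h1 with h1 | h1 <;> rcases h2 with h2 | h2 <;> rcases h3 with h3 | h3 <;>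
      simp [h1, h2, h3]
  have e1 := aux_eq (Or.inl rfl) ((mA₁.mul mB₁).mul mC₁) (prodpm pA₁ pB₁ pC₁) i1
  have e2 := aux_eq (Or.inl rfl) ((mA₂.mul mB₂).mul mC₁) (prodpm pA₂ pB₂ pC₁) i2
  have e3 := aux_eq (Or.inl rfl) ((mA₂.mul mB₁).mul mC₂) (prodpm pA₂ pB₁ pC₂) i3
  have e4 := aux_eq (Or.inr rfl) ((mA₁.mul mB₂).mul mC₂) (prodpm pA₁ pB₂ pC₂) i4
  have hall : ∀ᵐ ω ∂μ, False := by
    filter_upwards [e1, e2, e3, e4, pA₁, pA₂, pB₁, pB₂, pC₁, pC₂]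
      with ω h1 h2 h3 h4 a1 a2 b1 b2 c1 c2
    rcases a1 with a1 | a1 <;> rcases a2 with a2 | a2 <;> rcases b1 with b1 | b1 <;>
      rcases b2 with b2 | b2 <;> rcases c1 with c1 | c1 <;> rcases c2 with c2 | c2 <;>
      simp only [Pi.mul_apply, a1, a2, b1, b2, c1, c2] at h1 h2 h3 h4 <;> linarith
  have : μ Set.univ = 0 := by
    have := hall
    rw [MeasureTheory.ae_iff] at this
    simpa using this
  simp [hprob.measure_univ] at this
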